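/- Let p : ℕ → ℝ be a function with p(n) → 0 as n → ∞. Then the sums q(n) = Σ_{k=2}^{n} ∏_{i=k}^{n} |p(i)| satisfy q(n) → 0 as n → ∞. -/

import Mathlib

open Filter Finset

/-- If `p n → 0`, then the sums `q n = Σ_{k=2}^{n} ∏_{i=k}^{n} |p i|` tend to `0`. -/
theorem sum_prod_abs_tendsto_zero (p : ℕ → ℝ)
    (hp : Tendsto p atTop (nhds 0)) :
    Tendsto (fun n : ℕ => ∑ k ∈ Finset.Icc 2 n, ∏ i ∈ Finset.Icc k n, |p i|)
      atTop (nhds 0) := by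
  set q : ℕ → ℝ := fun n => ∑ k ∈ Finset.Icc 2 n, ∏ i ∈ Finset.Icc k n, |p i| with hqdef
  have hq0 : ∀ n, 0 ≤ q n := fun n => Finset.sum_nonneg fun k _ =>
    Finset.prod_nonneg fun i _ => abs_nonneg _
  have hrec : ∀ n, 1 ≤ n → q (n + 1) = |p (n + 1)| * (q n + 1) := by
    intro n hn
    have h2 : 2 ≤ n + 1 := by omega
    simp only [hqdef]
    rw [Finset.sum_Icc_succ_top h2]
    have hcongr : ∀ k ∈ Finset.Icc 2 n, (∏ i ∈ Finset.Icc k (n + 1), |p i|)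
        = (∏ i ∈ Finset.Icc k n, |p i|) * |p (n + 1)| := by
      intro k hk
      have hk' : k ≤ n + 1 := by
        have := (Finset.mem_Icc.mp hk).2; omega
      exact Finset.prod_Icc_succ_top hk' _
    rw [Finset.sum_congr rfl hcongr, ← Finset.sum_mul, Finset.Icc_self,
      Finset.prod_singleton]
    ring
  have habs : Tendsto (fun n => |p n|) atTop (nhds 0) := by
    simpa using hp.abs
  obtain ⟨N₀, hN₀⟩ := (Metric.tendsto_atTop.mp habs (1/2) (by norm_num))
  set N : ℕ := max N₀ 1 with hN
  have hhalf : ∀ n ≥ N, |p n| ≤ 1/2 := by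
    intro n hn
    have := hN₀ n (le_trans (le_max_left _ _) hn)
    rw [Real.dist_eq, sub_zero, abs_abs] at this
    linarith
  set M : ℝ := max (q N) 1 with hM
  have hM1 : 1 ≤ M := le_max_right _ _
  have hbound : ∀ n ≥ N, q n ≤ M := by
    intro n hn
    induction n, hn using Nat.le_induction with
    | base => exact le_max_left _ _
    | succ n hn ih =>
      rw [hrec n (le_trans (le_max_right _ _) hn)]
      have h1 : |p (n + 1)| ≤ 1/2 := hhalf (n + 1) (by omega)
      have h2 : q n + 1 ≤ M + 1 := by linarith
      calc |p (n + 1)| * (q n + 1) ≤ (1/2) * (M + 1) :=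
            mul_le_mul h1 h2 (by linarith [hq0 n]) (by norm_num)
        _ ≤ M := by linarith
  have hsq : ∀ᶠ n in atTop, q n ≤ (M + 1) * |p n| := by
    filter_upwards [eventually_ge_atTop (N + 1)] with n hn
    obtain ⟨m, rfl⟩ : ∃ m, n = m + 1 := ⟨n - 1, by omega⟩
    have hm : N ≤ m := by omega
    rw [hrec m (le_trans (le_max_right _ _) hm)]
    have : q m + 1 ≤ M + 1 := by linarith [hbound m hm]
    calc |p (m + 1)| * (q m + 1) ≤ |p (m + 1)| * (M + 1) :=
          mul_le_mul_of_nonneg_left this (abs_nonneg _)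
      _ = (M + 1) * |p (m + 1)| := by ring
  have hg : Tendsto (fun n => (M + 1) * |p n|) atTop (nhds 0) := by
    simpa using habs.const_mul (M + 1)
  exact squeeze_zero' (Eventually.of_forall hq0) hsq hg
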